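/- arXiv:2206.01933 — 4 statements merged into one kernel-verified Lean document; each statement's English description precedes it below -/
import Mathlib

section
/- Let K = {x ∈ ℝ² : θ_m < arg(x₁ + i x₂) < θ_M} be an open planar sector with -π < θ_m < θ_M < π, and let d, d⊥ ∈ S¹ be orthogonal unit vectors such that d · x̂ > ζ > 0 for all unit vectors x̂ in the closure of K ∩ S¹. Set ρ = -τ(d + i d⊥) for τ > 0. Then for every t > 0 there is a constant C = C(t, ζ) such that the L^t norm of e^{ρ·x} over the truncated sector S_h = K ∩ B_h satisfies ‖e^{ρ·x}‖_{L^t(S_h)} ≤ C (τ^{-2} + τ^{-1} e^{-(t/2) ζ h τ})^{1/t} for all sufficiently large τ. -/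
open MeasureTheory Set
open scoped RealInnerProductSpace

lemma exp_neg_le_aux (s : ℝ) (hs : 0 ≤ s) : Real.exp (-s) ≤ 27 * (1 + s) ^ (-(3 : ℝ)) := by
  have h1 : (1 + s) / 3 ≤ Real.exp (s / 3) := by
    have := Real.add_one_le_exp (s / 3)
    linarith
  have h1' : (0 : ℝ) ≤ (1 + s) / 3 := by linarith
  have hcube : ((1 + s) / 3) ^ 3 ≤ Real.exp (s / 3) ^ 3 := by
    exact pow_le_pow_left₀ h1' h1 3
  have hexp3 : Real.exp (s / 3) ^ 3 = Real.exp s := by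
    rw [← Real.exp_nat_mul]
    congr 1
    ring
  have hcube' : (1 + s) ^ 3 ≤ 27 * Real.exp s := by
    rw [hexp3] at hcube
    have : ((1 + s) / 3) ^ 3 = (1 + s) ^ 3 / 27 := by ring
    rw [this] at hcube
    linarith
  have hpow : (1 + s) ^ (-(3 : ℝ)) = ((1 + s) ^ (3 : ℕ))⁻¹ := by
    rw [show -(3 : ℝ) = -((3 : ℕ) : ℝ) by norm_num, Real.rpow_neg (by positivity),
      Real.rpow_natCast]
  have h3 : (0 : ℝ) < (1 + s) ^ (3 : ℕ) := by positivity
  rw [Real.exp_neg, hpow]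
  rw [inv_eq_one_div, inv_eq_one_div, mul_one_div, div_le_div_iff₀ (Real.exp_pos s) h3]
  nlinarith

lemma integrable_exp_neg_norm_E2 :
    Integrable (fun y : EuclideanSpace ℝ (Fin 2) => Real.exp (-‖y‖)) := by
  have hdim : ((Module.finrank ℝ (EuclideanSpace ℝ (Fin 2)) : ℝ)) < 3 := by
    simp [finrank_euclideanSpace]
    norm_num
  have hint : Integrable (fun y : EuclideanSpace ℝ (Fin 2) => 27 * (1 + ‖y‖) ^ (-(3 : ℝ))) :=
    (integrable_one_add_norm hdim).const_mul 27
  refine hint.mono' ?_ (Filter.Eventually.of_forall fun y => ?_)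
  · exact (Real.continuous_exp.comp continuous_norm.neg).aestronglyMeasurable
  · rw [Real.norm_eq_abs, abs_of_pos (Real.exp_pos _)]
    exact exp_neg_le_aux _ (norm_nonneg y)

/-- `L^t` estimate of the CGO phase `e^{ρ·x}`, `ρ = -τ(d + i d⊥)`, over a truncated
planar sector `S_h = K ∩ B_h`, where `d · x̂ > ζ > 0` for all unit directions `x̂` in
the closure of the sector: for every `t > 0` there is `C = C(t, ζ)` with
`‖e^{ρ·x}‖_{L^t(S_h)} ≤ C (τ^{-2} + τ^{-1} e^{-(t/2)ζhτ})^{1/t}` for large `τ`. -/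
theorem Lt_estimate_sector (θm θM : ℝ) (hm : -Real.pi < θm) (hmM : θm < θM)
    (hM : θM < Real.pi)
    (K : Set (EuclideanSpace ℝ (Fin 2)))
    (hK : K = {x | θm < Complex.arg ((x 0 : ℂ) + (x 1 : ℂ) * Complex.I) ∧
                   Complex.arg ((x 0 : ℂ) + (x 1 : ℂ) * Complex.I) < θM})
    (d dp : EuclideanSpace ℝ (Fin 2)) (hd : ‖d‖ = 1) (hdp : ‖dp‖ = 1)
    (horth : ⟪d, dp⟫ = 0) (ζ : ℝ) (hζ : 0 < ζ)
    (hsep : ∀ x ∈ closure K, ‖x‖ = 1 → ζ < ⟪d, x⟫)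
    (h : ℝ) (hh : 0 < h) (t : ℝ) (ht : 0 < t) :
    ∃ C > 0, ∃ T : ℝ, ∀ τ : ℝ, T ≤ τ →
      (∫ x in K ∩ Metric.ball 0 h,
          ‖Complex.exp (-(τ : ℂ) * ((⟪d, x⟫ : ℂ) + (⟪dp, x⟫ : ℂ) * Complex.I))‖ ^ t) ^ (1 / t)
        ≤ C * (1 / τ ^ 2 + (1 / τ) * Real.exp (-(t / 2) * ζ * h * τ)) ^ (1 / t) := by
  have hts : 0 < t * ζ := mul_pos ht hζ
  -- measurability of K
  have hFc : Continuous fun x : EuclideanSpace ℝ (Fin 2) =>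
      ((x 0 : ℂ) + (x 1 : ℂ) * Complex.I) := by fun_prop
  have hKmeas : MeasurableSet K := by
    rw [hK]
    have : {x : EuclideanSpace ℝ (Fin 2) |
        θm < Complex.arg ((x 0 : ℂ) + (x 1 : ℂ) * Complex.I) ∧
        Complex.arg ((x 0 : ℂ) + (x 1 : ℂ) * Complex.I) < θM} =
        (fun x : EuclideanSpace ℝ (Fin 2) =>
          Complex.arg ((x 0 : ℂ) + (x 1 : ℂ) * Complex.I)) ⁻¹' (Set.Ioo θm θM) := rfl
    rw [this]
    exact (Complex.measurable_arg.comp hFc.measurable) measurableSet_Ioo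
  -- cone property
  have hKcone : ∀ x ∈ K, ζ * ‖x‖ ≤ ⟪d, x⟫ := by
    intro x hx
    rcases eq_or_ne x 0 with rfl | hx0
    · simp
    · have hn : (0 : ℝ) < ‖x‖ := norm_pos_iff.2 hx0
      have hu : (‖x‖⁻¹ • x) ∈ K := by
        have harg : Complex.arg ((((‖x‖⁻¹ • x : EuclideanSpace ℝ (Fin 2)) 0 : ℝ) : ℂ) +
              (((‖x‖⁻¹ • x : EuclideanSpace ℝ (Fin 2)) 1 : ℝ) : ℂ) * Complex.I)
            = Complex.arg ((x 0 : ℂ) + (x 1 : ℂ) * Complex.I) := by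
          have e : (((‖x‖⁻¹ • x : EuclideanSpace ℝ (Fin 2)) 0 : ℝ) : ℂ) +
              (((‖x‖⁻¹ • x : EuclideanSpace ℝ (Fin 2)) 1 : ℝ) : ℂ) * Complex.I
              = ((‖x‖⁻¹ : ℝ) : ℂ) * ((x 0 : ℂ) + (x 1 : ℂ) * Complex.I) := by
            simp only [PiLp.smul_apply, smul_eq_mul]
            push_cast
            ring
          rw [e, Complex.arg_real_mul _ (inv_pos.2 hn)]
        rw [hK] at hx ⊢
        simp only [Set.mem_setOf_eq] at hx ⊢
        rw [harg]
        exact hx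
      have hnu : ‖(‖x‖⁻¹ • x : EuclideanSpace ℝ (Fin 2))‖ = 1 := by
        rw [norm_smul, norm_inv, norm_norm, inv_mul_cancel₀ hn.ne']
      have hzu := hsep _ (subset_closure hu) hnu
      rw [real_inner_smul_right, ← div_eq_inv_mul] at hzu
      exact ((lt_div_iff₀ hn).1 hzu).le
  set I0 : ℝ := ∫ y : EuclideanSpace ℝ (Fin 2), Real.exp (-‖y‖) with hI0def
  have hI0nn : 0 ≤ I0 := integral_nonneg fun y => (Real.exp_pos _).le
  set C0 : ℝ := (I0 + 1) / (t * ζ) ^ 2 with hC0def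
  have hC0 : 0 < C0 := by positivity
  refine ⟨C0 ^ (1 / t), Real.rpow_pos_of_pos hC0 _, (t * ζ)⁻¹, fun τ hτ => ?_⟩
  have hτpos : 0 < τ := lt_of_lt_of_le (inv_pos.2 hts) hτ
  set R : ℝ := t * ζ * τ with hRdef
  have hRpos : 0 < R := by positivity
  have hR1 : 1 ≤ R := by
    have := mul_le_mul_of_nonneg_left hτ hts.le
    rwa [mul_inv_cancel₀ hts.ne'] at this
  set S : Set (EuclideanSpace ℝ (Fin 2)) := K ∩ Metric.ball 0 h with hSdef
  have hS : MeasurableSet S := hKmeas.inter measurableSet_ball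
  -- the integrand equals a real exponential
  have hptval : ∀ x : EuclideanSpace ℝ (Fin 2),
      ‖Complex.exp (-(τ : ℂ) * ((⟪d, x⟫ : ℂ) + (⟪dp, x⟫ : ℂ) * Complex.I))‖ ^ t
        = Real.exp (-τ * ⟪d, x⟫ * t) := by
    intro x
    have hre : (-(τ : ℂ) * ((⟪d, x⟫ : ℂ) + (⟪dp, x⟫ : ℂ) * Complex.I)).re
        = -τ * ⟪d, x⟫ := by simp
    rw [Complex.norm_exp, hre,
      Real.rpow_def_of_pos (Real.exp_pos _), Real.log_exp]
  -- integrable comparison function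
  have hg : Integrable (fun x : EuclideanSpace ℝ (Fin 2) => Real.exp (-‖R • x‖)) := by
    refine integrable_exp_neg_norm_E2.mono'
      ((by fun_prop : Continuous (fun x : EuclideanSpace ℝ (Fin 2) => Real.exp (-‖R • x‖))).aestronglyMeasurable)
      (Filter.Eventually.of_forall fun x => ?_)
    rw [Real.norm_eq_abs, abs_of_pos (Real.exp_pos _)]
    apply Real.exp_le_exp.2
    rw [norm_smul, Real.norm_eq_abs, abs_of_pos hRpos]
    nlinarith [norm_nonneg x]
  -- continuity and integrability of the integrand
  have hcont : Continuous fun x : EuclideanSpace ℝ (Fin 2) =>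
      Real.exp (-τ * ⟪d, x⟫ * t) :=
    Real.continuous_exp.comp
      ((continuous_const.mul (continuous_const.inner continuous_id)).mul continuous_const)
  have hf_int : IntegrableOn (fun x : EuclideanSpace ℝ (Fin 2) =>
      Real.exp (-τ * ⟪d, x⟫ * t)) S := by
    refine (ContinuousOn.integrableOn_compact (isCompact_closedBall (0 : EuclideanSpace ℝ (Fin 2)) h)
      hcont.continuousOn).mono_set ?_
    exact inter_subset_right.trans Metric.ball_subset_closedBall
  -- key bound on the integral
  have hgval : (∫ x : EuclideanSpace ℝ (Fin 2), Real.exp (-‖R • x‖)) = (R ^ 2)⁻¹ * I0 := by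
    have := MeasureTheory.Measure.integral_comp_smul_of_nonneg (volume)
      (fun y : EuclideanSpace ℝ (Fin 2) => Real.exp (-‖y‖)) R (hR := hRpos.le)
    simpa [finrank_euclideanSpace, smul_eq_mul] using this
  have key : (∫ x in S,
      ‖Complex.exp (-(τ : ℂ) * ((⟪d, x⟫ : ℂ) + (⟪dp, x⟫ : ℂ) * Complex.I))‖ ^ t)
      ≤ C0 * (1 / τ ^ 2 + (1 / τ) * Real.exp (-(t / 2) * ζ * h * τ)) := by
    calc (∫ x in S,
        ‖Complex.exp (-(τ : ℂ) * ((⟪d, x⟫ : ℂ) + (⟪dp, x⟫ : ℂ) * Complex.I))‖ ^ t)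
        = ∫ x in S, Real.exp (-τ * ⟪d, x⟫ * t) := by
          simp_rw [hptval]
      _ ≤ ∫ x in S, Real.exp (-‖R • x‖) := by
          refine setIntegral_mono_on hf_int hg.integrableOn hS fun x hx => ?_
          have hcx := hKcone x hx.1
          apply Real.exp_le_exp.2
          rw [norm_smul, Real.norm_eq_abs, abs_of_pos hRpos, hRdef]
          nlinarith [mul_le_mul_of_nonneg_left hcx (mul_nonneg ht.le hτpos.le)]
      _ ≤ ∫ x : EuclideanSpace ℝ (Fin 2), Real.exp (-‖R • x‖) :=
          setIntegral_le_integral hg (Filter.Eventually.of_forall fun x => (Real.exp_pos _).le)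
      _ = (R ^ 2)⁻¹ * I0 := hgval
      _ = I0 / ((t * ζ) ^ 2 * τ ^ 2) := by
          rw [show R ^ 2 = (t * ζ) ^ 2 * τ ^ 2 from by rw [hRdef]; ring]
          ring
      _ ≤ (I0 + 1) / ((t * ζ) ^ 2 * τ ^ 2) := by
          gcongr
          linarith
      _ = C0 * (1 / τ ^ 2) := by
          rw [hC0def, div_mul_div_comm, mul_one]
      _ ≤ C0 * (1 / τ ^ 2 + (1 / τ) * Real.exp (-(t / 2) * ζ * h * τ)) := by
          refine mul_le_mul_of_nonneg_left ?_ hC0.le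
          have : (0 : ℝ) ≤ (1 / τ) * Real.exp (-(t / 2) * ζ * h * τ) := by positivity
          linarith
  have hA : 0 ≤ ∫ x in S,
      ‖Complex.exp (-(τ : ℂ) * ((⟪d, x⟫ : ℂ) + (⟪dp, x⟫ : ℂ) * Complex.I))‖ ^ t :=
    integral_nonneg fun x => Real.rpow_nonneg (norm_nonneg _) t
  calc (∫ x in S,
      ‖Complex.exp (-(τ : ℂ) * ((⟪d, x⟫ : ℂ) + (⟪dp, x⟫ : ℂ) * Complex.I))‖ ^ t) ^ (1 / t)
      ≤ (C0 * (1 / τ ^ 2 + (1 / τ) * Real.exp (-(t / 2) * ζ * h * τ))) ^ (1 / t) :=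
        Real.rpow_le_rpow hA key (by positivity)
    _ = C0 ^ (1 / t) * (1 / τ ^ 2 + (1 / τ) * Real.exp (-(t / 2) * ζ * h * τ)) ^ (1 / t) :=
        Real.mul_rpow hC0.le (by positivity)
end

section
/- Let K be an open planar sector as above with boundary rays Γ± (the rays at angles θ_m and θ_M), and let d, d⊥, ρ = -τ(d + i d⊥) satisfy d · x̂ > ζ > 0 for all x̂ ∈ K̄ ∩ S¹. Then for every t > 0 there is C = C(t, ζ) with ‖e^{ρ·x}‖_{L^t(Γ_h^±)} ≤ C (τ^{-1} + τ^{-1} e^{-(t/2) ζ h τ})^{1/t} for sufficiently large τ, where Γ_h^± = Γ^± ∩ B_h. -/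
open MeasureTheory Set
open scoped RealInnerProductSpace

private lemma exp_integral_bound {c h : ℝ} (hc : 0 < c) (hh : 0 < h) :
    ∫ r in Set.Ioo (0:ℝ) h, Real.exp (-(c * r)) ≤ 1 / c := by
  have D : ∀ x ∈ Set.uIcc (0:ℝ) h, HasDerivAt (fun y : ℝ => -Real.exp (-(c * y)) / c)
      (Real.exp (-(c * x))) x := by
    intro x _
    have h1 : HasDerivAt (fun y : ℝ => -(c * y)) (-c) x := by
      exact (((hasDerivAt_id x).const_mul c).neg).congr_deriv (by ring)
    have h2 := (Real.hasDerivAt_exp (-(c * x))).comp x h1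
    have h3 := h2.neg.div_const c
    have h4 : HasDerivAt (fun y : ℝ => -Real.exp (-(c * y)) / c) (-(Real.exp (-(c * x)) * -c) / c) x := h3
    convert h4 using 1
    field_simp
  have key : ∫ r in (0:ℝ)..h, Real.exp (-(c * r))
      = -Real.exp (-(c * h)) / c - -Real.exp (-(c * 0)) / c := by
    apply intervalIntegral.integral_eq_sub_of_hasDerivAt D
    apply Continuous.intervalIntegrable
    continuity
  rw [← MeasureTheory.integral_Ioc_eq_integral_Ioo, ← intervalIntegral.integral_of_le hh.le, key]
  have e0 : -Real.exp (-(c * h)) / c - -Real.exp (-(c * 0)) / c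
      = (1 - Real.exp (-(c * h))) / c := by
    rw [mul_zero, neg_zero, Real.exp_zero]; ring
  rw [e0]
  have := (Real.exp_pos (-(c * h))).le
  gcongr
  linarith

private lemma norm_exp_eq (τ r a b : ℝ) :
    ‖Complex.exp (-(τ:ℂ) * (r:ℂ) * ((a:ℂ) + (b:ℂ) * Complex.I))‖ = Real.exp (-(τ * r * a)) := by
  rw [Complex.norm_exp]
  congr 1
  simp [Complex.mul_re, Complex.mul_im, Complex.add_re, Complex.add_im]

private lemma arg_pt (θ : ℝ) (h1 : -Real.pi < θ) (h2 : θ ≤ Real.pi) :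
    Complex.arg (((WithLp.toLp 2 ![Real.cos θ, Real.sin θ] : EuclideanSpace ℝ (Fin 2)) 0 : ℂ)
      + ((WithLp.toLp 2 ![Real.cos θ, Real.sin θ] : EuclideanSpace ℝ (Fin 2)) 1 : ℂ) * Complex.I) = θ := by
  show Complex.arg ((Real.cos θ : ℂ) + (Real.sin θ : ℂ) * Complex.I) = θ
  rw [Complex.ofReal_cos, Complex.ofReal_sin]
  exact Complex.arg_cos_add_sin_mul_I ⟨h1, h2⟩

private lemma cont_pt :
    Continuous (fun θ : ℝ => (WithLp.toLp 2 ![Real.cos θ, Real.sin θ] : EuclideanSpace ℝ (Fin 2))) := by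
  apply Continuous.comp (PiLp.continuous_toLp 2 (fun _ : Fin 2 => ℝ))
  apply continuous_pi
  intro i
  fin_cases i
  · exact Real.continuous_cos
  · exact Real.continuous_sin

private lemma mem_closure_pt (θm θM : ℝ) (hm : -Real.pi < θm) (hmM : θm < θM)
    (hM : θM < Real.pi) (K : Set (EuclideanSpace ℝ (Fin 2)))
    (hK : K = {x | θm < Complex.arg ((x 0 : ℂ) + (x 1 : ℂ) * Complex.I) ∧
                   Complex.arg ((x 0 : ℂ) + (x 1 : ℂ) * Complex.I) < θM})
    (θ : ℝ) (hθ : θ = θm ∨ θ = θM) :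
    (WithLp.toLp 2 ![Real.cos θ, Real.sin θ] : EuclideanSpace ℝ (Fin 2)) ∈ closure K := by
  have hmem : ∀ ψ ∈ Set.Ioo θm θM, (WithLp.toLp 2 ![Real.cos ψ, Real.sin ψ] : EuclideanSpace ℝ (Fin 2)) ∈ K := by
    intro ψ hψ
    rw [hK]
    constructor <;> rw [arg_pt ψ (by linarith [hψ.1]) (by linarith [hψ.2])]
    · exact hψ.1
    · exact hψ.2
  rcases hθ with rfl | rfl
  · refine mem_closure_of_tendsto
      (cont_pt.continuousAt.tendsto.mono_left (nhdsWithin_le_nhds (s := Set.Ioi θ))) ?_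
    filter_upwards [Ioo_mem_nhdsGT hmM] with ψ hψ using hmem ψ hψ
  · refine mem_closure_of_tendsto
      (cont_pt.continuousAt.tendsto.mono_left (nhdsWithin_le_nhds (s := Set.Iio θ))) ?_
    filter_upwards [Ioo_mem_nhdsLT hmM] with ψ hψ using hmem ψ hψ

private lemma norm_pt (θ : ℝ) (x : EuclideanSpace ℝ (Fin 2))
    (hx : x = ![Real.cos θ, Real.sin θ]) : ‖x‖ = 1 := by
  rw [EuclideanSpace.norm_eq, hx]
  have e0 : (![Real.cos θ, Real.sin θ] : Fin 2 → ℝ) 0 = Real.cos θ := rfl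
  have e1 : (![Real.cos θ, Real.sin θ] : Fin 2 → ℝ) 1 = Real.sin θ := rfl
  rw [Fin.sum_univ_two, e0, e1]
  simp [Real.norm_eq_abs, sq_abs]

/-- `L^t` estimate of the CGO phase `e^{ρ·x}`, `ρ = -τ(d + i d⊥)`, on the truncated
boundary rays `Γ_h^±` (of length `h`, at angles `θ_m`, `θ_M`) of a planar sector,
parametrized by arclength: for every `t > 0` there is `C = C(t, ζ)` with
`‖e^{ρ·x}‖_{L^t(Γ_h^±)} ≤ C (τ^{-1} + τ^{-1} e^{-(t/2)ζhτ})^{1/t}` for large `τ`. -/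
theorem Lt_estimate_sector_boundary (θm θM : ℝ) (hm : -Real.pi < θm) (hmM : θm < θM)
    (hM : θM < Real.pi)
    (K : Set (EuclideanSpace ℝ (Fin 2)))
    (hK : K = {x | θm < Complex.arg ((x 0 : ℂ) + (x 1 : ℂ) * Complex.I) ∧
                   Complex.arg ((x 0 : ℂ) + (x 1 : ℂ) * Complex.I) < θM})
    (d dp : EuclideanSpace ℝ (Fin 2)) (hd : ‖d‖ = 1) (hdp : ‖dp‖ = 1)
    (horth : ⟪d, dp⟫ = 0) (ζ : ℝ) (hζ : 0 < ζ)
    (hsep : ∀ x ∈ closure K, ‖x‖ = 1 → ζ < ⟪d, x⟫)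
    (xm xM : EuclideanSpace ℝ (Fin 2))
    (hxm : xm = ![Real.cos θm, Real.sin θm]) (hxM : xM = ![Real.cos θM, Real.sin θM])
    (h : ℝ) (hh : 0 < h) (t : ℝ) (ht : 0 < t) :
    ∃ C > 0, ∃ T : ℝ, ∀ τ : ℝ, T ≤ τ →
      ((∫ r in Set.Ioo (0 : ℝ) h,
          ‖Complex.exp (-(τ : ℂ) * (r : ℂ) * ((⟪d, xm⟫ : ℂ) + (⟪dp, xm⟫ : ℂ) * Complex.I))‖ ^ t) +
        ∫ r in Set.Ioo (0 : ℝ) h,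
          ‖Complex.exp (-(τ : ℂ) * (r : ℂ) * ((⟪d, xM⟫ : ℂ) + (⟪dp, xM⟫ : ℂ) * Complex.I))‖ ^ t) ^ (1 / t)
        ≤ C * (1 / τ + (1 / τ) * Real.exp (-(t / 2) * ζ * h * τ)) ^ (1 / t) := by
  have ham : ζ < ⟪d, xm⟫ := by
    apply hsep
    · rw [show xm = WithLp.toLp 2 ![Real.cos θm, Real.sin θm] from congrArg (WithLp.toLp 2) hxm]; exact mem_closure_pt θm θM hm hmM hM K hK θm (Or.inl rfl)
    · exact norm_pt θm xm hxm
  have haM : ζ < ⟪d, xM⟫ := by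
    apply hsep
    · rw [show xM = WithLp.toLp 2 ![Real.cos θM, Real.sin θM] from congrArg (WithLp.toLp 2) hxM]; exact mem_closure_pt θm θM hm hmM hM K hK θM (Or.inr rfl)
    · exact norm_pt θM xM hxM
  set B : ℝ := 2 / (t * ζ) with hB
  have hBpos : 0 < B := by positivity
  refine ⟨B ^ (1/t), Real.rpow_pos_of_pos hBpos _, 1, fun τ hτ => ?_⟩
  have hτ0 : 0 < τ := lt_of_lt_of_le one_pos hτ
  have key : ∀ a b : ℝ, ζ < a →
      (∫ r in Set.Ioo (0 : ℝ) h,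
        ‖Complex.exp (-(τ : ℂ) * (r : ℂ) * ((a : ℂ) + (b : ℂ) * Complex.I))‖ ^ t)
      ≤ 1 / (τ * a * t) := by
    intro a b ha
    have ha0 : 0 < a := lt_trans hζ ha
    have hc : 0 < τ * a * t := by positivity
    have e1 : ∫ r in Set.Ioo (0 : ℝ) h,
        ‖Complex.exp (-(τ : ℂ) * (r : ℂ) * ((a : ℂ) + (b : ℂ) * Complex.I))‖ ^ t
        = ∫ r in Set.Ioo (0 : ℝ) h, Real.exp (-((τ * a * t) * r)) := by
      apply setIntegral_congr_fun measurableSet_Ioo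
      intro r _
      show ‖Complex.exp (-(τ:ℂ) * (r:ℂ) * ((a:ℂ) + (b:ℂ) * Complex.I))‖ ^ t
        = Real.exp (-((τ * a * t) * r))
      rw [norm_exp_eq, ← Real.exp_mul]
      congr 1; ring
    rw [e1]
    exact exp_integral_bound hc hh
  have hIm := key ⟪d, xm⟫ ⟪dp, xm⟫ ham
  have hIM := key ⟪d, xM⟫ ⟪dp, xM⟫ haM
  have hsum : (∫ r in Set.Ioo (0 : ℝ) h,
          ‖Complex.exp (-(τ : ℂ) * (r : ℂ) * ((⟪d, xm⟫ : ℂ) + (⟪dp, xm⟫ : ℂ) * Complex.I))‖ ^ t) +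
        ∫ r in Set.Ioo (0 : ℝ) h,
          ‖Complex.exp (-(τ : ℂ) * (r : ℂ) * ((⟪d, xM⟫ : ℂ) + (⟪dp, xM⟫ : ℂ) * Complex.I))‖ ^ t
        ≤ B * (1 / τ) := by
    have b1 : 1 / (τ * ⟪d, xm⟫ * t) ≤ 1 / (τ * ζ * t) := by gcongr
    have b2 : 1 / (τ * ⟪d, xM⟫ * t) ≤ 1 / (τ * ζ * t) := by gcongr
    have e2 : B * (1 / τ) = 1 / (τ * ζ * t) + 1 / (τ * ζ * t) := by
      rw [hB]; field_simp; ring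
    rw [e2]
    exact add_le_add (hIm.trans b1) (hIM.trans b2)
  have hnonneg : (0:ℝ) ≤ (∫ r in Set.Ioo (0 : ℝ) h,
          ‖Complex.exp (-(τ : ℂ) * (r : ℂ) * ((⟪d, xm⟫ : ℂ) + (⟪dp, xm⟫ : ℂ) * Complex.I))‖ ^ t) +
        ∫ r in Set.Ioo (0 : ℝ) h,
          ‖Complex.exp (-(τ : ℂ) * (r : ℂ) * ((⟪d, xM⟫ : ℂ) + (⟪dp, xM⟫ : ℂ) * Complex.I))‖ ^ t := by
    have hp : ∀ (z : ℂ), (0:ℝ) ≤ ‖z‖ ^ t := fun z => Real.rpow_nonneg (norm_nonneg z) t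
    apply add_nonneg <;> exact setIntegral_nonneg measurableSet_Ioo (fun r _ => hp _)
  calc _ ≤ (B * (1 / τ)) ^ (1/t) :=
        Real.rpow_le_rpow hnonneg hsum (by positivity)
    _ = B ^ (1/t) * (1/τ) ^ (1/t) := Real.mul_rpow hBpos.le (by positivity)
    _ ≤ B ^ (1/t) * (1 / τ + (1 / τ) * Real.exp (-(t / 2) * ζ * h * τ)) ^ (1/t) := by
        apply mul_le_mul_of_nonneg_left _ (Real.rpow_nonneg hBpos.le _)
        apply Real.rpow_le_rpow (by positivity) _ (by positivity)
        have := (Real.exp_pos (-(t / 2) * ζ * h * τ)).le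
        have h1τ : (0:ℝ) ≤ 1/τ := by positivity
        nlinarith
end

section
/- Let z₁ = ρ₁ · x̂₁(θ), z₂ = ρ₁ · x̂₂(θ), z₃ = ρ₁ · x̂₃(θ), where ρ₁ = d + i d⊥ with d = (1,1,1)ᵀ, d⊥ = (1,-1,0)ᵀ, and x̂₁(θ) = (0, sin θ, cos θ)ᵀ, x̂₂(θ) = (sin θ, 0, cos θ)ᵀ, x̂₃(θ) = (cos θ, sin θ, 0)ᵀ for a fixed θ ∈ (0, π/2). Then |1/z₁² + 1/z₂² + 1/z₃²| ≥ sin³θ / 30 > 0. -/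
open scoped BigOperators

/-- With `ρ₁ = d + i d⊥`, `d = (1,1,1)ᵀ`, `d⊥ = (1,-1,0)ᵀ`, and
`x̂₁(θ) = (0, sin θ, cos θ)ᵀ`, `x̂₂(θ) = (sin θ, 0, cos θ)ᵀ`, `x̂₃(θ) = (cos θ, sin θ, 0)ᵀ`
for fixed `θ ∈ (0, π/2)`, setting `z_j = ρ₁ · x̂_j(θ)` (bilinear dot product), one has
`|1/z₁² + 1/z₂² + 1/z₃²| ≥ sin³θ / 30 > 0`. -/
theorem cuboid_corner_phase_lower_bound (θ : ℝ) (hθ : 0 < θ) (hθ' : θ < Real.pi / 2)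
    (ρ₁ : Fin 3 → ℂ)
    (hρ : ρ₁ = fun i => (![1, 1, 1] i : ℂ) + Complex.I * (![1, -1, 0] i : ℂ))
    (z₁ z₂ z₃ : ℂ)
    (hz₁ : z₁ = ∑ i : Fin 3, ρ₁ i * (![(0 : ℂ), (Real.sin θ : ℂ), (Real.cos θ : ℂ)] i))
    (hz₂ : z₂ = ∑ i : Fin 3, ρ₁ i * (![(Real.sin θ : ℂ), (0 : ℂ), (Real.cos θ : ℂ)] i))
    (hz₃ : z₃ = ∑ i : Fin 3, ρ₁ i * (![(Real.cos θ : ℂ), (Real.sin θ : ℂ), (0 : ℂ)] i)) :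
    0 < Real.sin θ ^ 3 / 30 ∧
      Real.sin θ ^ 3 / 30 ≤ ‖1 / z₁ ^ 2 + 1 / z₂ ^ 2 + 1 / z₃ ^ 2‖ := by
  set s := Real.sin θ with hs_def
  set c := Real.cos θ with hc_def
  have hs : 0 < s := Real.sin_pos_of_pos_of_lt_pi hθ (by linarith [Real.pi_pos])
  have hc : 0 < c := Real.cos_pos_of_mem_Ioo ⟨by linarith [Real.pi_pos], hθ'⟩
  have hpy : s ^ 2 + c ^ 2 = 1 := by
    rw [hs_def, hc_def]; exact Real.sin_sq_add_cos_sq θ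
  have hpyC : (s : ℂ) ^ 2 + (c : ℂ) ^ 2 = 1 := by exact_mod_cast congrArg (Complex.ofReal ·) hpy
  have hz1' : z₁ = (↑s + ↑c) - ↑s * Complex.I := by
    rw [hz₁, hρ, Fin.sum_univ_three]; simp; ring
  have hz2' : z₂ = (↑s + ↑c) + ↑s * Complex.I := by
    rw [hz₂, hρ, Fin.sum_univ_three]; simp; ring
  have hz3' : z₃ = (↑s + ↑c) + (↑c - ↑s) * Complex.I := by
    rw [hz₃, hρ, Fin.sum_univ_three]; simp; ring
  -- z₁ z₂ is a positive real
  have hz12 : z₁ * z₂ = ((((s + c) ^ 2 + s ^ 2 : ℝ)) : ℂ) := by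
    rw [hz1', hz2']; push_cast
    linear_combination (-(s : ℂ) ^ 2) * Complex.I_sq
  have hdpos : (0 : ℝ) < (s + c) ^ 2 + s ^ 2 := by positivity
  have h1 : z₁ ≠ 0 := by
    intro h; rw [h, zero_mul] at hz12
    exact absurd (Complex.ofReal_eq_zero.mp hz12.symm) (by positivity)
  have h2 : z₂ ≠ 0 := by
    intro h; rw [h, mul_zero] at hz12
    exact absurd (Complex.ofReal_eq_zero.mp hz12.symm) (by positivity)
  have hsumsq : z₁ ^ 2 + z₂ ^ 2 = ((2 * c * (c + 2 * s) : ℝ) : ℂ) := by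
    rw [hz1', hz2']; push_cast
    linear_combination (2 * (s : ℂ) ^ 2) * Complex.I_sq
  have e12 : 1 / z₁ ^ 2 + 1 / z₂ ^ 2
      = ((2 * c * (c + 2 * s) / ((s + c) ^ 2 + s ^ 2) ^ 2 : ℝ) : ℂ) := by
    rw [div_add_div _ _ (pow_ne_zero 2 h1) (pow_ne_zero 2 h2)]
    rw [show z₁ ^ 2 * z₂ ^ 2 = (z₁ * z₂) ^ 2 by ring, hz12]
    rw [show (1 : ℂ) * z₂ ^ 2 + z₁ ^ 2 * 1 = z₁ ^ 2 + z₂ ^ 2 by ring, hsumsq]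
    push_cast; ring
  have h3w : z₃ ^ 2 * (↑(s * c) - ↑((s + c) * (c - s) / 2) * Complex.I) = 1 := by
    rw [hz3']; push_cast
    linear_combination (((c : ℂ) - s) ^ 2 * s * c - ((s : ℂ) + c) ^ 2 * ((c : ℂ) - s) ^ 2
        - (((s : ℂ) + c) * ((c : ℂ) - s) ^ 3 / 2) * Complex.I) * Complex.I_sq
      + (((s : ℂ) ^ 2 + (c : ℂ) ^ 2) + 1) * hpyC
  have e3 : 1 / z₃ ^ 2 = ↑(s * c) - ↑((s + c) * (c - s) / 2) * Complex.I := by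
    rw [one_div]
    exact inv_eq_of_mul_eq_one_right h3w
  set R : ℝ := 2 * c * (c + 2 * s) / ((s + c) ^ 2 + s ^ 2) ^ 2 + s * c with hR
  have eS : 1 / z₁ ^ 2 + 1 / z₂ ^ 2 + 1 / z₃ ^ 2
      = (R : ℂ) + ((-((s + c) * (c - s) / 2) : ℝ) : ℂ) * Complex.I := by
    rw [e12, e3, hR]; push_cast; ring
  have hre : (1 / z₁ ^ 2 + 1 / z₂ ^ 2 + 1 / z₃ ^ 2).re = R := by
    rw [eS]; simp
  have him : (1 / z₁ ^ 2 + 1 / z₂ ^ 2 + 1 / z₃ ^ 2).im = -((s + c) * (c - s) / 2) := by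
    rw [eS]; simp
  constructor
  · positivity
  · set Z := 1 / z₁ ^ 2 + 1 / z₂ ^ 2 + 1 / z₃ ^ 2
    have hZre := Complex.abs_re_le_norm Z
    have hZim := Complex.abs_im_le_norm Z
    rw [hre] at hZre
    rw [him] at hZim
    have hRpos : 0 ≤ R := by
      rw [hR]; positivity
    have hs1 : s ≤ 1 := by rw [hs_def]; exact Real.sin_le_one θ
    -- key: R + |im| ≥ s^2/3
    have hdiv : 0 ≤ 2 * c * (c + 2 * s) / ((s + c) ^ 2 + s ^ 2) ^ 2 := by positivity
    have hsc : s * c ≤ R := by rw [hR]; linarith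
    rcases le_or_gt (s / 3) c with hcase | hcase
    · -- c ≥ s/3 : R ≥ s*c ≥ s^2/3
      have : s ^ 2 / 3 ≤ R := by nlinarith [mul_le_mul_of_nonneg_left hcase hs.le]
      calc s ^ 3 / 30 ≤ s ^ 2 / 3 := by nlinarith
        _ ≤ R := this
        _ = |R| := (abs_of_nonneg hRpos).symm
        _ ≤ ‖Z‖ := hZre
    · -- c < s/3 : |im| = (s+c)(s-c)/2 ≥ s * (2s/3) / 2 = s^2/3
      have him' : s ^ 2 / 3 ≤ |(-((s + c) * (c - s) / 2))| := by
        rw [abs_neg, abs_div, abs_of_nonneg (by norm_num : (0:ℝ) ≤ 2) ]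
        rw [abs_mul]
        have h1' : s ≤ |s + c| := by rw [abs_of_pos (by linarith)]; linarith
        have h2' : 2 * s / 3 ≤ |c - s| := by
          rw [abs_of_nonpos (by linarith)]; linarith
        have hm : s * (2 * s / 3) ≤ |s + c| * |c - s| :=
          mul_le_mul h1' h2' (by positivity) (abs_nonneg (s + c))
        have he : s * (2 * s / 3) = 2 * s ^ 2 / 3 := by ring
        linarith
      calc s ^ 3 / 30 ≤ s ^ 2 / 3 := by nlinarith
        _ ≤ |(-((s + c) * (c - s) / 2))| := him'
        _ ≤ ‖Z‖ := hZim
end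

section
/- Let K be an open planar sector with -π < θ_m < θ_M < π and opening angle 0 < θ_M - θ_m < π, let d ⊥ d⊥ be unit vectors with d · x̂ > ζ > 0 for all x̂ ∈ K̄ ∩ S¹, and set ρ = -τ(d + i d⊥). Then for S_h = K ∩ B_h, the modulus of the area integral satisfies |∫_{S_h} e^{ρ·x} dx| ≥ C̃_S / τ² - (C'/τ) e^{-(1/2) ζ h τ} for all sufficiently large τ, where C̃_S > 0 depends only on the opening angle and ζ. -/
open MeasureTheory Set
open scoped RealInnerProductSpace

private noncomputable def psiE : EuclideanSpace ℝ (Fin 2) ≃ᵐ ℂ :=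
  ((MeasurableEquiv.toLp 2 (Fin 2 → ℝ)).symm.trans (MeasurableEquiv.finTwoArrow)).trans
    Complex.measurableEquivRealProd.symm

private lemma psiE_measurePreserving : MeasurePreserving psiE :=
  (Complex.volume_preserving_equiv_real_prod.symm).comp
    ((volume_preserving_finTwoArrow ℝ).comp (EuclideanSpace.volume_preserving_symm_measurableEquiv_toLp (Fin 2)))

private lemma psiE_apply (x : EuclideanSpace ℝ (Fin 2)) :
    psiE x = (x 0 : ℂ) + (x 1 : ℂ) * Complex.I := by
  simp [psiE, Complex.measurableEquivRealProd, Complex.equivRealProd, MeasurableEquiv.finTwoArrow,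
    MeasurableEquiv.toLp, Complex.equivRealProdCLM_symm_apply]; rfl

private lemma radial_int (c : ℂ) (hc : c ≠ 0) (h : ℝ) (hh : 0 ≤ h) :
    ∫ r in Ioo (0:ℝ) h, (r:ℂ) * Complex.exp (-(c*r)) =
      (c^2)⁻¹ - (c*h+1) * (c^2)⁻¹ * Complex.exp (-(c*h)) := by
  have key : ∀ r : ℝ, HasDerivAt (fun s : ℝ => -((c*s+1) * (c^2)⁻¹ * Complex.exp (-(c*s))))
      ((r:ℂ) * Complex.exp (-(c*r))) r := by
    intro r
    have h1 : HasDerivAt (fun s : ℝ => (c*s+1) * (c^2)⁻¹ : ℝ → ℂ) (c * (c^2)⁻¹) r := by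
      have : HasDerivAt (fun s : ℝ => (c*s : ℂ)) c r := by
        simpa using ((hasDerivAt_id r).ofReal_comp.const_mul c)
      simpa using (this.add_const 1).mul_const ((c^2)⁻¹)
    have h2 : HasDerivAt (fun s : ℝ => Complex.exp (-(c*s))) (-c * Complex.exp (-(c*r))) r := by
      have : HasDerivAt (fun s : ℝ => (-(c*s) : ℂ)) (-c) r := by
        exact (show HasDerivAt (fun s : ℝ => (c*s : ℂ)) c r by
          simpa using ((hasDerivAt_id r).ofReal_comp.const_mul c)).neg
      simpa [mul_comm] using this.cexp
    have := (h1.mul h2).neg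
    refine this.congr_deriv ?_
    have hc2 : c^2 * (c^2)⁻¹ = 1 := mul_inv_cancel₀ (pow_ne_zero 2 hc)
    linear_combination ((r:ℂ) * Complex.exp (-(c*r))) * hc2
  rw [← MeasureTheory.integral_Ioc_eq_integral_Ioo, ← intervalIntegral.integral_of_le hh]
  rw [intervalIntegral.integral_eq_sub_of_hasDerivAt (fun r _ => key r)
    (Continuous.intervalIntegrable (by continuity) _ _)]
  push_cast
  simp [Complex.exp_zero]
  ring

private lemma reduction_step (θm θM : ℝ) (hm : -Real.pi < θm) (hmM : θm < θM) (hM : θM < Real.pi)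
    (K : Set (EuclideanSpace ℝ (Fin 2)))
    (hK : K = {x | θm < Complex.arg ((x 0 : ℂ) + (x 1 : ℂ) * Complex.I) ∧
                   Complex.arg ((x 0 : ℂ) + (x 1 : ℂ) * Complex.I) < θM})
    (d dp : EuclideanSpace ℝ (Fin 2)) (a b t : ℝ)
    (ha : d 0 = a) (hb : d 1 = b)
    (hc0 : dp 0 = -t*b) (he0 : dp 1 = t*a)
    (w : ℝ → ℂ)
    (hwdef : w = fun θ => ((a*Real.cos θ + b*Real.sin θ : ℝ) : ℂ) +
      ((t*(a*Real.sin θ - b*Real.cos θ) : ℝ) : ℂ) * Complex.I)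
    (habsw : ∀ θ, ‖w θ‖ = 1)
    (τ : ℝ) (hτ0 : 0 < τ) (h : ℝ) (hh : 0 < h) :
    (∫ x in K ∩ Metric.ball 0 h,
        Complex.exp (-(τ : ℂ) * ((⟪d, x⟫ : ℂ) + (⟪dp, x⟫ : ℂ) * Complex.I))) =
      (∫ θ in Ioo θm θM, (((τ:ℂ)*(w θ))^2)⁻¹) -
      ∫ θ in Ioo θm θM, ((τ:ℂ)*(w θ)*h+1) * (((τ:ℂ)*(w θ))^2)⁻¹ *
          Complex.exp (-((τ:ℂ)*(w θ)*h)) := by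
  have hwne : ∀ θ, w θ ≠ 0 := fun θ => by
    intro h0; have := habsw θ; rw [h0] at this; simp at this
  have hτc : ((τ:ℂ)) ≠ 0 := by exact_mod_cast hτ0.ne'
  have hcne : ∀ θ, (τ:ℂ)*(w θ) ≠ 0 := fun θ => mul_ne_zero hτc (hwne θ)
  set g : ℂ → ℂ := fun z => Complex.exp (-(τ:ℂ) * (((a*z.re + b*z.im : ℝ) : ℂ) +
      ((t*(a*z.im - b*z.re) : ℝ) : ℂ) * Complex.I)) with hgdef
  have hgc : Continuous g := by
    rw [hgdef]; fun_prop
  set S' : Set ℂ := {z : ℂ | θm < Complex.arg z ∧ Complex.arg z < θM} ∩ Metric.ball 0 h with hS'def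
  have hS'meas : MeasurableSet S' := by
    apply MeasurableSet.inter
    · exact (measurableSet_lt measurable_const Complex.measurable_arg).inter
        (measurableSet_lt Complex.measurable_arg measurable_const)
    · exact measurableSet_ball
  -- transfer to ℂ
  have hpre : psiE ⁻¹' S' = K ∩ Metric.ball 0 h := by
    ext x
    have hnorm : ‖psiE x‖ = ‖x‖ := by
      rw [psiE_apply, Complex.norm_add_mul_I, EuclideanSpace.norm_eq]
      simp [Fin.sum_univ_two, sq_abs]
    simp only [mem_preimage, hS'def, mem_inter_iff, mem_setOf_eq, Metric.mem_ball,
      Complex.dist_eq, dist_zero_right, sub_zero, hK]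
    rw [psiE_apply]
    constructor
    · rintro ⟨h1, h2⟩
      refine ⟨h1, ?_⟩
      have := hnorm
      rw [psiE_apply] at this
      rw [← this]
      simpa using h2
    · rintro ⟨h1, h2⟩
      refine ⟨h1, ?_⟩
      have := hnorm
      rw [psiE_apply] at this
      rw [this]
      exact h2
  have hstep1 : (∫ x in K ∩ Metric.ball 0 h,
      Complex.exp (-(τ : ℂ) * ((⟪d, x⟫ : ℂ) + (⟪dp, x⟫ : ℂ) * Complex.I))) =
      ∫ z in S', g z := by
    rw [← hpre]
    rw [show (fun x : EuclideanSpace ℝ (Fin 2) =>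
        Complex.exp (-(τ : ℂ) * ((⟪d, x⟫ : ℂ) + (⟪dp, x⟫ : ℂ) * Complex.I))) =
        fun x => g (psiE x) from funext fun x => by
      rw [hgdef]
      simp only [psiE_apply]
      have hre : ((x 0 : ℂ) + (x 1 : ℂ) * Complex.I).re = x 0 := by simp
      have him : ((x 0 : ℂ) + (x 1 : ℂ) * Complex.I).im = x 1 := by simp
      rw [hre, him]
      have h1 : ⟪d, x⟫ = a * x 0 + b * x 1 := by
        simp [PiLp.inner_apply, Fin.sum_univ_two, ha, hb]; ring
      have h2 : ⟪dp, x⟫ = t*(a * x 1 - b * x 0) := by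
        simp [PiLp.inner_apply, Fin.sum_univ_two, hc0, he0]; ring
      rw [h1, h2]]
    exact psiE_measurePreserving.setIntegral_preimage_emb psiE.measurableEmbedding g S'
  set q : ℝ × ℝ → ℂ := fun p => (p.1 : ℂ) * ((Real.cos p.2 : ℂ) + (Real.sin p.2 : ℂ) * Complex.I)
    with hqdef
  have hqc : Continuous q := by rw [hqdef]; fun_prop
  set F : ℝ × ℝ → ℂ := fun p => p.1 • g (q p) with hFdef
  have hFc : Continuous F := by rw [hFdef]; exact (continuous_fst.smul (hgc.comp hqc))
  have htar : polarCoord.target ∩ q ⁻¹' S' = Ioo 0 h ×ˢ Ioo θm θM := by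
    ext ⟨r, θ⟩
    simp only [polarCoord_target, mem_inter_iff, mem_prod, mem_Ioi, mem_Ioo, mem_preimage,
      hS'def, hqdef, mem_setOf_eq, Metric.mem_ball, Complex.dist_eq, dist_zero_right, sub_zero]
    constructor
    · rintro ⟨⟨hr, hθ1, hθ2⟩, ⟨ha1, ha2⟩, hb1⟩
      have harg : Complex.arg ((r : ℂ) * ((Real.cos θ : ℂ) + (Real.sin θ : ℂ) * Complex.I)) = θ := by
        rw [Complex.ofReal_cos, Complex.ofReal_sin]
        exact Complex.arg_mul_cos_add_sin_mul_I hr ⟨hθ1, hθ2.le⟩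
      rw [harg] at ha1 ha2
      have habs : ‖(r : ℂ) * ((Real.cos θ : ℂ) + (Real.sin θ : ℂ) * Complex.I)‖ = r := by
        rw [norm_mul, Complex.norm_real, Real.norm_eq_abs,
          Complex.norm_add_mul_I]
        rw [show Real.cos θ^2 + Real.sin θ^2 = 1 from by
          linear_combination Real.sin_sq_add_cos_sq θ]
        rw [Real.sqrt_one, abs_of_pos hr]; ring
      rw [habs] at hb1
      exact ⟨⟨hr, hb1⟩, ha1, ha2⟩
    · rintro ⟨⟨hr, hrh⟩, hθ1, hθ2⟩
      have hθ1' : -Real.pi < θ := by linarith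
      have hθ2' : θ < Real.pi := by linarith
      have harg : Complex.arg ((r : ℂ) * ((Real.cos θ : ℂ) + (Real.sin θ : ℂ) * Complex.I)) = θ := by
        rw [Complex.ofReal_cos, Complex.ofReal_sin]
        exact Complex.arg_mul_cos_add_sin_mul_I hr ⟨hθ1', hθ2'.le⟩
      have habs : ‖(r : ℂ) * ((Real.cos θ : ℂ) + (Real.sin θ : ℂ) * Complex.I)‖ = r := by
        rw [norm_mul, Complex.norm_real, Real.norm_eq_abs,
          Complex.norm_add_mul_I]
        rw [show Real.cos θ^2 + Real.sin θ^2 = 1 from by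
          linear_combination Real.sin_sq_add_cos_sq θ]
        rw [Real.sqrt_one, abs_of_pos hr]; ring
      exact ⟨⟨hr, hθ1', hθ2'⟩, ⟨by rw [harg]; exact hθ1, by rw [harg]; exact hθ2⟩,
        by rw [habs]; exact hrh⟩
  have hstep2 : (∫ z in S', g z) = ∫ p in Ioo 0 h ×ˢ Ioo θm θM, F p := by
    rw [← integral_indicator hS'meas, ← Complex.integral_comp_polarCoord_symm]
    have hptw : ∀ p : ℝ × ℝ, p.1 • S'.indicator g (Complex.polarCoord.symm p) =
        (q ⁻¹' S').indicator F p := by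
      intro p
      have hq' : Complex.polarCoord.symm p = q p := by
        rw [hqdef, Complex.polarCoord_symm_apply]
      rw [hq']
      by_cases hp : q p ∈ S'
      · rw [indicator_of_mem hp, indicator_of_mem (mem_preimage.mpr hp)]
      · rw [indicator_of_notMem hp, indicator_of_notMem (fun hx => hp (mem_preimage.mp hx)),
          smul_zero]
    simp only [hptw]
    rw [setIntegral_indicator (hqc.measurable hS'meas), htar]
  have hIntF : IntegrableOn F (Ioo 0 h ×ˢ Ioo θm θM) := by
    apply (hFc.continuousOn.integrableOn_compact (isCompact_Icc.prod isCompact_Icc)).mono_set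
    exact prod_mono Ioo_subset_Icc_self Ioo_subset_Icc_self
  have hstep3 : (∫ p in Ioo 0 h ×ˢ Ioo θm θM, F p) =
      ∫ θ in Ioo θm θM, ∫ r in Ioo 0 h, F (r, θ) := by
    rw [show (volume : Measure (ℝ × ℝ)) = (volume : Measure ℝ).prod volume from
      (MeasureTheory.Measure.volume_eq_prod ℝ ℝ)]
    rw [← Measure.prod_restrict]
    apply MeasureTheory.integral_prod_symm
    rw [Measure.prod_restrict]
    rw [← MeasureTheory.Measure.volume_eq_prod]
    exact hIntF
  have hstep4 : (∫ θ in Ioo θm θM, ∫ r in Ioo 0 h, F (r, θ)) =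
      ∫ θ in Ioo θm θM, ((((τ:ℂ)*(w θ))^2)⁻¹ -
        ((τ:ℂ)*(w θ)*h+1) * (((τ:ℂ)*(w θ))^2)⁻¹ * Complex.exp (-((τ:ℂ)*(w θ)*h))) := by
    apply MeasureTheory.setIntegral_congr_fun measurableSet_Ioo
    intro θ _
    have hFr : ∀ r : ℝ, F (r, θ) = (r:ℂ) * Complex.exp (-(((τ:ℂ)*(w θ))*r)) := by
      intro r
      rw [hFdef]
      simp only
      rw [hqdef]
      simp only
      rw [hgdef]
      simp only
      have hre : ((r:ℂ) * ((Real.cos θ : ℂ) + (Real.sin θ : ℂ) * Complex.I)).re =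
          r * Real.cos θ := by simp [Complex.cos_ofReal_re]
      have him : ((r:ℂ) * ((Real.cos θ : ℂ) + (Real.sin θ : ℂ) * Complex.I)).im =
          r * Real.sin θ := by simp [Complex.sin_ofReal_re]
      rw [hre, him, Complex.real_smul]
      congr 1
      rw [hwdef]
      push_cast
      ring
    simp only [hFr]
    exact radial_int ((τ:ℂ)*(w θ)) (hcne θ) h hh.le
  rw [hstep1, hstep2, hstep3, hstep4]
  have hcw : Continuous fun θ => (((τ:ℂ)*(w θ))^2)⁻¹ := by
    have hwc : Continuous w := by rw [hwdef]; fun_prop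
    exact ((continuous_const.mul hwc).pow 2).inv₀ (fun θ => pow_ne_zero 2 (hcne θ))
  have hI1 : IntegrableOn (fun θ => (((τ:ℂ)*(w θ))^2)⁻¹) (Ioo θm θM) :=
    (hcw.integrableOn_Icc).mono_set Ioo_subset_Icc_self
  have hI2 : IntegrableOn (fun θ => ((τ:ℂ)*(w θ)*h+1) * (((τ:ℂ)*(w θ))^2)⁻¹ *
      Complex.exp (-((τ:ℂ)*(w θ)*h))) (Ioo θm θM) := by
    have hwc : Continuous w := by rw [hwdef]; fun_prop
    have : Continuous fun θ => ((τ:ℂ)*(w θ)*h+1) * (((τ:ℂ)*(w θ))^2)⁻¹ *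
        Complex.exp (-((τ:ℂ)*(w θ)*h)) := by
      apply Continuous.mul
      · exact (((continuous_const.mul hwc).mul continuous_const).add continuous_const).mul hcw
      · exact Complex.continuous_exp.comp (((continuous_const.mul hwc).mul continuous_const).neg)
    exact (this.integrableOn_Icc).mono_set Ioo_subset_Icc_self
  exact MeasureTheory.integral_sub hI1 hI2


private lemma angular_int (θm θM a b t : ℝ) (hmM : θm < θM) (haper : θM - θm < Real.pi)
    (hab : a^2 + b^2 = 1) (ht1 : t = 1 ∨ t = -1)
    (w : ℝ → ℂ)
    (hwdef : w = fun θ => ((a*Real.cos θ + b*Real.sin θ : ℝ) : ℂ) +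
      ((t*(a*Real.sin θ - b*Real.cos θ) : ℝ) : ℂ) * Complex.I)
    (habsw : ∀ θ, ‖w θ‖ = 1) (hwne : ∀ θ, w θ ≠ 0) :
    ‖∫ θ in Ioo θm θM, ((w θ)^2)⁻¹‖ = Real.sin (θM - θm) := by
  have ht2 : t*t = 1 := by rcases ht1 with h|h <;> rw [h] <;> norm_num
  have ht2c : (t:ℂ)*(t:ℂ) = 1 := by exact_mod_cast congrArg (fun x : ℝ => (x:ℂ)) ht2
  have hΔpos : 0 < θM - θm := by linarith
  have hsin : 0 < Real.sin (θM - θm) := Real.sin_pos_of_pos_of_lt_pi hΔpos haper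
  set cw : ℝ → ℂ := fun θ => ((a*Real.cos θ + b*Real.sin θ : ℝ) : ℂ) -
      ((t*(a*Real.sin θ - b*Real.cos θ) : ℝ) : ℂ) * Complex.I with hcwdef
  have hconjw : ∀ θ, ((w θ)^2)⁻¹ = cw θ * cw θ := by
    intro θ
    rw [Complex.inv_eq_conj (by rw [norm_pow, habsw θ, one_pow])]
    rw [map_pow, sq]
    congr 1 <;>
    · rw [hwdef, hcwdef]
      simp only [map_add, map_mul, Complex.conj_ofReal, Complex.conj_I]
      ring
  have habscw : ∀ θ, ‖cw θ‖ = 1 := by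
    intro θ
    have h1 : ‖cw θ‖ * ‖cw θ‖ = 1 := by
      rw [← norm_mul, ← hconjw θ, norm_inv, norm_pow, habsw θ]; norm_num
    nlinarith [norm_nonneg (cw θ)]
  -- derivative of cw
  have hcwd : ∀ θ, HasDerivAt cw (-(t:ℂ)*Complex.I*(cw θ)) θ := by
    intro θ
    have hA : HasDerivAt (fun θ => a*Real.cos θ + b*Real.sin θ)
        (a*(-Real.sin θ) + b*Real.cos θ) θ :=
      ((Real.hasDerivAt_cos θ).const_mul a).add ((Real.hasDerivAt_sin θ).const_mul b)
    have hB : HasDerivAt (fun θ => t*(a*Real.sin θ - b*Real.cos θ))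
        (t*(a*Real.cos θ - b*(-Real.sin θ))) θ :=
      (((Real.hasDerivAt_sin θ).const_mul a).sub ((Real.hasDerivAt_cos θ).const_mul b)).const_mul t
    have hder : HasDerivAt cw (((a*(-Real.sin θ) + b*Real.cos θ : ℝ) : ℂ) -
        ((t*(a*Real.cos θ - b*(-Real.sin θ)) : ℝ) : ℂ) * Complex.I) θ := by
      rw [hcwdef]
      exact (hA.ofReal_comp).sub ((hB.ofReal_comp).mul_const Complex.I)
    convert hder using 1
    rw [show cw θ = ((a*Real.cos θ + b*Real.sin θ : ℝ) : ℂ) -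
      ((t*(a*Real.sin θ - b*Real.cos θ) : ℝ) : ℂ) * Complex.I from by rw [hcwdef]]
    push_cast
    linear_combination ((↑a * Complex.sin ↑θ - ↑b * Complex.cos ↑θ) * ((t:ℂ)*↑t)) * Complex.I_sq -
      (↑a * Complex.sin ↑θ - ↑b * Complex.cos ↑θ) * ht2c
  -- antiderivative
  have hMder : ∀ θ, HasDerivAt (fun θ => ((t:ℂ)*Complex.I/2) * (cw θ * cw θ)) (cw θ * cw θ) θ := by
    intro θ
    have hd := ((hcwd θ).mul (hcwd θ)).const_mul ((t:ℂ)*Complex.I/2)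
    refine hd.congr_deriv ?_
    linear_combination -(cw θ * cw θ * ((t:ℂ)*↑t)) * Complex.I_sq + (cw θ * cw θ) * ht2c
  have hcwc : Continuous cw := by rw [hcwdef]; fun_prop
  have hIval : (∫ θ in Ioo θm θM, ((w θ)^2)⁻¹) =
      ((t:ℂ)*Complex.I/2) * (cw θM * cw θM - cw θm * cw θm) := by
    rw [MeasureTheory.setIntegral_congr_fun measurableSet_Ioo (fun θ _ => hconjw θ)]
    rw [← MeasureTheory.integral_Ioc_eq_integral_Ioo, ← intervalIntegral.integral_of_le hmM.le]
    rw [intervalIntegral.integral_eq_sub_of_hasDerivAt (fun θ _ => hMder θ)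
      ((hcwc.mul hcwc).intervalIntegrable _ _)]
    ring
  rw [hIval]
  -- rotation
  set Δ := θM - θm with hΔdef
  set ρ : ℂ := ((Real.cos Δ : ℝ) : ℂ) - ((t*Real.sin Δ : ℝ) : ℂ) * Complex.I with hρdef
  have hrot : cw θM = cw θm * ρ := by
    rw [hcwdef, hρdef]
    simp only
    rw [show θM = θm + Δ from by rw [hΔdef]; ring, Real.cos_add, Real.sin_add]
    push_cast
    linear_combination (-(Complex.sin ↑Δ) * (↑a*Complex.sin ↑θm - ↑b*Complex.cos ↑θm) * ((t:ℂ)*↑t)) * Complex.I_sq +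
      (Complex.sin ↑Δ * (↑a*Complex.sin ↑θm - ↑b*Complex.cos ↑θm)) * ht2c
  have hsq : ρ * ρ - 1 = ((Real.cos (2*Δ) - 1 : ℝ) : ℂ) - ((t*Real.sin (2*Δ) : ℝ) : ℂ) * Complex.I := by
    rw [hρdef, Real.cos_two_mul, Real.sin_two_mul]
    have hpyc : Complex.sin ↑Δ^2 + Complex.cos ↑Δ^2 = 1 := Complex.sin_sq_add_cos_sq ↑Δ
    push_cast
    linear_combination (Complex.sin ↑Δ^2) * Complex.I_sq - hpyc + (Complex.sin ↑Δ^2 * Complex.I^2) * ht2c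
  have habst : |t| = 1 := by rcases ht1 with h|h <;> rw [h] <;> norm_num
  have hdiff : cw θM * cw θM - cw θm * cw θm = (cw θm * cw θm) * (ρ*ρ - 1) := by
    rw [hrot]; ring
  have habs2 : ‖ρ*ρ - 1‖ = 2 * Real.sin Δ := by
    rw [hsq]
    rw [show ((Real.cos (2*Δ) - 1 : ℝ) : ℂ) - ((t*Real.sin (2*Δ) : ℝ) : ℂ) * Complex.I =
      ((Real.cos (2*Δ) - 1 : ℝ) : ℂ) + ((-(t*Real.sin (2*Δ)) : ℝ) : ℂ) * Complex.I from by
        push_cast; ring]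
    rw [Complex.norm_add_mul_I]
    rw [show (Real.cos (2*Δ) - 1)^2 + (-(t*Real.sin (2*Δ)))^2 = (2*Real.sin Δ)^2 from by
      linear_combination (Real.sin (2*Δ)^2)*ht2 + Real.sin_sq_add_cos_sq (2*Δ) -
        2*(Real.cos_two_mul Δ) - 4*(Real.sin_sq_add_cos_sq Δ)]
    exact Real.sqrt_sq (by linarith)
  rw [hdiff, norm_mul, norm_mul, norm_mul, habscw θm, habs2]
  rw [norm_div, norm_mul, Complex.norm_I, Complex.norm_real, Real.norm_eq_abs, Complex.norm_two, habst]
  norm_num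
  ring

private lemma bounds_step (θm θM ζ τ h : ℝ) (hmM : θm < θM) (hζ : 0 < ζ) (hτ0 : 0 < τ) (hτ : 1 ≤ τ) (hh : 0 < h)
    (w : ℝ → ℂ) (habsw : ∀ θ, ‖w θ‖ = 1)
    (hsec : ∀ θ ∈ Ioo θm θM, ζ < (w θ).re)
    (hIw : ‖∫ θ in Ioo θm θM, ((w θ)^2)⁻¹‖ = Real.sin (θM - θm)) :
    ‖∫ θ in Ioo θm θM, (((τ:ℂ)*(w θ))^2)⁻¹‖ = Real.sin (θM - θm) / τ^2 ∧
    ‖∫ θ in Ioo θm θM, ((τ:ℂ)*(w θ)*h+1) * (((τ:ℂ)*(w θ))^2)⁻¹ *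
      Complex.exp (-((τ:ℂ)*(w θ)*h))‖ ≤ (θM - θm) * ((τ*h+1)/τ^2 * Real.exp (-(τ*h*ζ))) := by
  constructor
  · have : (∫ θ in Ioo θm θM, (((τ:ℂ)*(w θ))^2)⁻¹) =
        (((τ:ℂ)^2)⁻¹) * ∫ θ in Ioo θm θM, ((w θ)^2)⁻¹ := by
      rw [← MeasureTheory.integral_const_mul]
      congr 1
      funext θ
      rw [mul_pow, mul_inv]
    rw [this, norm_mul, norm_inv, norm_pow, Complex.norm_real, Real.norm_eq_abs, abs_of_pos hτ0, hIw]
    ring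
  · have hbound : ∀ θ ∈ Ioo θm θM, ‖((τ:ℂ)*(w θ)*h+1) * (((τ:ℂ)*(w θ))^2)⁻¹ *
        Complex.exp (-((τ:ℂ)*(w θ)*h))‖ ≤ (τ*h+1)/τ^2 * Real.exp (-(τ*h*ζ)) := by
      intro θ hθ
      rw [norm_mul, norm_mul]
      have e1 : ‖(((τ:ℂ)*(w θ))^2)⁻¹‖ = (τ^2)⁻¹ := by
        rw [norm_inv, norm_pow, norm_mul, Complex.norm_real, Real.norm_eq_abs,
          abs_of_pos hτ0, habsw θ, mul_one]
      have e2 : ‖((τ:ℂ)*(w θ)*h+1 : ℂ)‖ ≤ τ*h+1 := by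
        calc ‖((τ:ℂ)*(w θ)*h+1 : ℂ)‖ ≤ ‖((τ:ℂ)*(w θ)*h : ℂ)‖ + ‖(1:ℂ)‖ := norm_add_le _ _
          _ = τ*h+1 := by
            rw [norm_one, norm_mul, norm_mul, Complex.norm_real, Complex.norm_real,
              Real.norm_eq_abs, Real.norm_eq_abs, habsw θ,
              abs_of_pos hτ0, abs_of_pos hh, mul_one]
      have e3 : ‖Complex.exp (-((τ:ℂ)*(w θ)*h))‖ ≤ Real.exp (-(τ*h*ζ)) := by
        rw [Complex.norm_exp]
        apply Real.exp_le_exp.mpr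
        have hre : (-((τ:ℂ)*(w θ)*h)).re = -(τ * (w θ).re * h) := by
          simp [Complex.mul_re, Complex.mul_im]
        rw [hre]
        have h5 := (hsec θ hθ).le
        nlinarith [mul_le_mul_of_nonneg_left h5 (by positivity : (0:ℝ) ≤ τ*h)]
      calc ‖((τ:ℂ)*(w θ)*h+1 : ℂ)‖ * ‖(((τ:ℂ)*(w θ))^2)⁻¹‖ * ‖Complex.exp (-((τ:ℂ)*(w θ)*h))‖
          ≤ (τ*h+1) * (τ^2)⁻¹ * Real.exp (-(τ*h*ζ)) := by
            rw [e1]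
            apply mul_le_mul _ e3 (norm_nonneg _) (by positivity)
            exact mul_le_mul_of_nonneg_right e2 (by positivity)
        _ = (τ*h+1)/τ^2 * Real.exp (-(τ*h*ζ)) := by ring
    have := MeasureTheory.norm_setIntegral_le_of_norm_le_const
      (by rw [Real.volume_Ioo]; exact ENNReal.ofReal_lt_top) hbound
    rw [Real.volume_real_Ioo_of_le hmM.le] at this
    calc ‖∫ θ in Ioo θm θM, ((τ:ℂ)*(w θ)*h+1) * (((τ:ℂ)*(w θ))^2)⁻¹ *
          Complex.exp (-((τ:ℂ)*(w θ)*h))‖ ≤ (τ*h+1)/τ^2 * Real.exp (-(τ*h*ζ)) * (θM - θm) := this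
      _ = (θM - θm) * ((τ*h+1)/τ^2 * Real.exp (-(τ*h*ζ))) := by ring

private lemma final_arith (Δ ζ h τ : ℝ) (hΔpos : 0 < Δ) (hζ : 0 < ζ) (hh : 0 < h)
    (hτ : 1 ≤ τ) :
    Δ * ((τ*h+1)/τ^2 * Real.exp (-(τ*h*ζ))) ≤
      Δ*(1+h) / τ * Real.exp (-(1 / 2) * ζ * h * τ) := by
  have hτ0 : 0 < τ := lt_of_lt_of_le one_pos hτ
  have hE : Real.exp (-(τ*h*ζ)) = Real.exp (-(1 / 2) * ζ * h * τ) * Real.exp (-(1 / 2) * ζ * h * τ) := by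
    rw [← Real.exp_add]; ring_nf
  have hE1 : Real.exp (-(1 / 2) * ζ * h * τ) ≤ 1 := by
    rw [Real.exp_le_one_iff]
    have : 0 < ζ*h*τ := by positivity
    linarith
  have hEpos : 0 < Real.exp (-(1 / 2) * ζ * h * τ) := Real.exp_pos _
  set E := Real.exp (-(1 / 2) * ζ * h * τ) with hEdef
  rw [hE]
  have hq : (τ*h+1)/τ^2 ≤ (1+h)/τ := by
    rw [div_le_div_iff₀ (by positivity) hτ0]
    nlinarith
  have hEE : E*E ≤ E := by nlinarith
  have hqE : (τ*h+1)/τ^2 * (E*E) ≤ (1+h)/τ * E :=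
    mul_le_mul hq hEE (by positivity) (by positivity)
  calc Δ * ((τ*h+1)/τ^2 * (E*E)) ≤ Δ * ((1+h)/τ * E) := by
        exact mul_le_mul_of_nonneg_left hqE hΔpos.le
    _ = Δ*(1+h) / τ * E := by ring

/-- Lower bound for the area integral of the CGO phase `e^{ρ·x}`, `ρ = -τ(d + i d⊥)`,
over the truncated planar sector `S_h = K ∩ B_h` with aperture in `(0, π)`:
`|∫_{S_h} e^{ρ·x} dx| ≥ C̃_S/τ² - (C'/τ) e^{-(1/2)ζhτ}` for sufficiently large `τ`,
with `C̃_S > 0` depending only on the opening angle and `ζ`. -/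
theorem area_integral_lower_bound_sector (θm θM : ℝ) (hm : -Real.pi < θm)
    (hmM : θm < θM) (hM : θM < Real.pi) (haper : θM - θm < Real.pi)
    (K : Set (EuclideanSpace ℝ (Fin 2)))
    (hK : K = {x | θm < Complex.arg ((x 0 : ℂ) + (x 1 : ℂ) * Complex.I) ∧
                   Complex.arg ((x 0 : ℂ) + (x 1 : ℂ) * Complex.I) < θM})
    (d dp : EuclideanSpace ℝ (Fin 2)) (hd : ‖d‖ = 1) (hdp : ‖dp‖ = 1)
    (horth : ⟪d, dp⟫ = 0) (ζ : ℝ) (hζ : 0 < ζ)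
    (hsep : ∀ x ∈ closure K, ‖x‖ = 1 → ζ < ⟪d, x⟫)
    (h : ℝ) (hh : 0 < h) :
    ∃ C > 0, ∃ C' : ℝ, ∃ T : ℝ, ∀ τ : ℝ, T ≤ τ →
      C / τ ^ 2 - C' / τ * Real.exp (-(1 / 2) * ζ * h * τ) ≤
        ‖∫ x in K ∩ Metric.ball 0 h,
          Complex.exp (-(τ : ℂ) * ((⟪d, x⟫ : ℂ) + (⟪dp, x⟫ : ℂ) * Complex.I))‖ := by
  set a := d 0 with ha
  set b := d 1 with hb
  set c0 := dp 0 with hc0'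
  set e0 := dp 1 with he0'
  have hab : a^2 + b^2 = 1 := by
    have h1 : Real.sqrt (a^2+b^2) = 1 := by
      simpa [EuclideanSpace.norm_eq, Fin.sum_univ_two, sq_abs] using hd
    nlinarith [Real.sq_sqrt (by positivity : (0:ℝ) ≤ a^2+b^2)]
  have hce : c0^2 + e0^2 = 1 := by
    have h1 : Real.sqrt (c0^2+e0^2) = 1 := by
      simpa [EuclideanSpace.norm_eq, Fin.sum_univ_two, sq_abs] using hdp
    nlinarith [Real.sq_sqrt (by positivity : (0:ℝ) ≤ c0^2+e0^2)]
  have hortho : a*c0 + b*e0 = 0 := by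
    have := horth; simp [PiLp.inner_apply, Fin.sum_univ_two] at this; linarith
  set t := a*e0 - b*c0 with htdef
  have ht2 : t*t = 1 := by
    linear_combination (c0^2+e0^2)*hab + hce - (a*c0+b*e0)*hortho + (t + (a*e0-b*c0))*htdef
  have hc0 : c0 = -t*b := by linear_combination a*hortho - c0*hab + b*htdef
  have he0 : e0 = t*a := by linear_combination b*hortho - e0*hab - a*htdef
  -- the phase direction on the unit circle
  set w : ℝ → ℂ := fun θ => ((a*Real.cos θ + b*Real.sin θ : ℝ) : ℂ) +
      ((t*(a*Real.sin θ - b*Real.cos θ) : ℝ) : ℂ) * Complex.I with hwdef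
  have habsw : ∀ θ, ‖w θ‖ = 1 := by
    intro θ
    rw [hwdef]
    rw [Complex.norm_add_mul_I]
    rw [show (a*Real.cos θ + b*Real.sin θ)^2 + (t*(a*Real.sin θ - b*Real.cos θ))^2 = 1 from by
      linear_combination ((a*Real.sin θ - b*Real.cos θ)^2)*ht2 +
        (Real.cos θ^2+Real.sin θ^2)*hab + Real.sin_sq_add_cos_sq θ]
    exact Real.sqrt_one
  have hwne : ∀ θ, w θ ≠ 0 := fun θ => by
    intro h0; have := habsw θ; rw [h0] at this; simp at this
  have hwre : ∀ θ, (w θ).re = a*Real.cos θ + b*Real.sin θ := fun θ => by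
    rw [hwdef]
    simp only [Complex.add_re, Complex.mul_re, Complex.ofReal_re, Complex.I_re,
      Complex.ofReal_im, Complex.I_im]
    ring
  have hsec : ∀ θ ∈ Ioo θm θM, ζ < (w θ).re := by
    intro θ hθ
    rw [hwre θ]
    set xh : EuclideanSpace ℝ (Fin 2) := !₂[Real.cos θ, Real.sin θ] with hxh
    have hx0 : xh 0 = Real.cos θ := rfl
    have hx1 : xh 1 = Real.sin θ := rfl
    have harg : Complex.arg ((xh 0 : ℂ) + (xh 1 : ℂ) * Complex.I) = θ := by
      rw [hx0, hx1, Complex.ofReal_cos, Complex.ofReal_sin]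
      exact Complex.arg_cos_add_sin_mul_I (θ := θ) ⟨by linarith [hθ.1], by linarith [hθ.2]⟩
    have hmem : xh ∈ K := by rw [hK]; exact ⟨by rw [harg]; exact hθ.1, by rw [harg]; exact hθ.2⟩
    have hnorm : ‖xh‖ = 1 := by
      rw [EuclideanSpace.norm_eq]
      simp [Fin.sum_univ_two, hx0, hx1, sq_abs]
    have := hsep xh (subset_closure hmem) hnorm
    rw [show ⟪d, xh⟫ = d 0 * Real.cos θ + d 1 * Real.sin θ from by
      simp [PiLp.inner_apply, Fin.sum_univ_two, hx0, hx1]; ring] at this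
    rw [ha, hb]
    exact this
  set Δ := θM - θm with hΔ
  have hΔpos : 0 < Δ := by simp [hΔ]; linarith
  have hsin : 0 < Real.sin Δ := Real.sin_pos_of_pos_of_lt_pi hΔpos haper
  -- exact value of the angular integral
  have ht1 : t = 1 ∨ t = -1 := mul_self_eq_one_iff.mp ht2
  have hIw : ‖∫ θ in Ioo θm θM, ((w θ)^2)⁻¹‖ = Real.sin Δ :=
    angular_int θm θM a b t hmM haper hab ht1 w hwdef habsw hwne
  refine ⟨Real.sin Δ, hsin, Δ*(1+h), 1, ?_⟩
  intro τ hτ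
  have hτ0 : 0 < τ := lt_of_lt_of_le one_pos hτ
  -- reduction of the 2D integral to the angular integral
  have hred : (∫ x in K ∩ Metric.ball 0 h,
        Complex.exp (-(τ : ℂ) * ((⟪d, x⟫ : ℂ) + (⟪dp, x⟫ : ℂ) * Complex.I))) =
      (∫ θ in Ioo θm θM, (((τ:ℂ)*(w θ))^2)⁻¹) -
      ∫ θ in Ioo θm θM, ((τ:ℂ)*(w θ)*h+1) * (((τ:ℂ)*(w θ))^2)⁻¹ *
          Complex.exp (-((τ:ℂ)*(w θ)*h)) :=
    reduction_step θm θM hm hmM hM K hK d dp a b t ha.symm hb.symm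
      (by rw [← hc0']; exact hc0) (by rw [← he0']; exact he0) w hwdef habsw τ hτ0 h hh
  -- bound the remainder term
  have hrem : ‖∫ θ in Ioo θm θM, ((τ:ℂ)*(w θ)*h+1) * (((τ:ℂ)*(w θ))^2)⁻¹ *
      Complex.exp (-((τ:ℂ)*(w θ)*h))‖ ≤ Δ * ((τ*h+1)/τ^2 * Real.exp (-(τ*h*ζ))) :=
    (bounds_step θm θM ζ τ h hmM hζ hτ0 hτ hh w habsw hsec hIw).2
  -- exact value of the main term
  have hmain : ‖∫ θ in Ioo θm θM, (((τ:ℂ)*(w θ))^2)⁻¹‖ = Real.sin Δ / τ^2 :=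
    (bounds_step θm θM ζ τ h hmM hζ hτ0 hτ hh w habsw hsec hIw).1
  rw [hred]
  have htri := norm_sub_norm_le (∫ θ in Ioo θm θM, (((τ:ℂ)*(w θ))^2)⁻¹)
    (∫ θ in Ioo θm θM, ((τ:ℂ)*(w θ)*h+1) * (((τ:ℂ)*(w θ))^2)⁻¹ * Complex.exp (-((τ:ℂ)*(w θ)*h)))
  rw [hmain] at htri
  refine le_trans ?_ htri
  have hfinal := final_arith Δ ζ h τ hΔpos hζ hh hτ
  linarith [hrem]
end
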